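/- Let (X,d) be a metric space, let x : Fin n → X be agents, and let k be an integer with n/2 ≤ k ≤ n − 2; take M = X (every point of the space is a feasible center location). Then there exists a k-clustering Y : Fin k → X that is a (1, 2)-core clustering; that is, for every set S ⊆ Fin n with |S| ≥ n/k and every point y' ∈ X, one has 2·Σ_{i∈S} d(x_i, y') ≥ Σ_{i∈S} min_{j<k} d(x_i, Y_j). -/
import Mathlib

open Finset

section NN

variable {X : Type*} [MetricSpace X] {n : ℕ}

/-- Existence of a tie-broken nearest neighbor. -/
lemma exists_nn (x : Fin n → X) (h2 : 2 ≤ n) (i : Fin n) :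
    ∃ j : Fin n, j ≠ i ∧ (∀ l : Fin n, l ≠ i → dist (x i) (x j) ≤ dist (x i) (x l)) ∧
      (∀ l : Fin n, l ≠ i → dist (x i) (x l) = dist (x i) (x j) → j ≤ l) := by
  classical
  set F := Finset.univ.erase i with hF
  have hFne : F.Nonempty := by
    apply Finset.card_pos.mp
    rw [hF, Finset.card_erase_of_mem (Finset.mem_univ i), Finset.card_univ, Fintype.card_fin]
    omega
  obtain ⟨j1, hj1F, hmin⟩ := F.exists_min_image (fun j => dist (x i) (x j)) hFne
  set B := F.filter (fun j => dist (x i) (x j) = dist (x i) (x j1)) with hB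
  have hBne : B.Nonempty := ⟨j1, by simp [hB, hj1F]⟩
  have hmem : B.min' hBne ∈ F ∧ dist (x i) (x (B.min' hBne)) = dist (x i) (x j1) :=
    Finset.mem_filter.mp (B.min'_mem hBne)
  have hmemF : B.min' hBne ≠ i := (Finset.mem_erase.mp hmem.1).1
  refine ⟨B.min' hBne, hmemF, ?_, ?_⟩
  · intro l hl
    rw [hmem.2]
    exact hmin l (Finset.mem_erase.mpr ⟨hl, Finset.mem_univ l⟩)
  · intro l hl he
    apply B.min'_le
    refine Finset.mem_filter.mpr ⟨Finset.mem_erase.mpr ⟨hl, Finset.mem_univ l⟩, ?_⟩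
    rw [he, hmem.2]

/-- Tie-broken nearest neighbor map. -/
noncomputable def nnF (x : Fin n → X) (h2 : 2 ≤ n) (i : Fin n) : Fin n :=
  (exists_nn x h2 i).choose

lemma nnF_ne (x : Fin n → X) (h2 : 2 ≤ n) (i : Fin n) : nnF x h2 i ≠ i :=
  (exists_nn x h2 i).choose_spec.1

lemma nnF_min (x : Fin n → X) (h2 : 2 ≤ n) (i : Fin n) {l : Fin n} (hl : l ≠ i) :
    dist (x i) (x (nnF x h2 i)) ≤ dist (x i) (x l) :=
  (exists_nn x h2 i).choose_spec.2.1 l hl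

lemma nnF_tie (x : Fin n → X) (h2 : 2 ≤ n) (i : Fin n) {l : Fin n}
    (hl : l ≠ i) (he : dist (x i) (x l) = dist (x i) (x (nnF x h2 i))) :
    nnF x h2 i ≤ l :=
  (exists_nn x h2 i).choose_spec.2.2 l hl he

/-- Pair removal step for the dominating-set construction. -/
lemma pair_step (f : Fin n → Fin n) (A C' : Finset (Fin n)) (i0 : Fin n)
    (hi0 : i0 ∈ A) (hj : f i0 ∈ A) (hji : f i0 ≠ i0)
    (hC1 : 2 * C'.card ≤ ((A.erase i0).erase (f i0)).card)
    (hC2 : ∀ i ∈ (A.erase i0).erase (f i0),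
      i ∈ C' ∨ f i ∈ C' ∨ f i ∉ (A.erase i0).erase (f i0))
    (hpre : ∀ i ∈ (A.erase i0).erase (f i0), f i ≠ i0) :
    ∃ C : Finset (Fin n), 2 * C.card ≤ A.card ∧
      ∀ i ∈ A, i ∈ C ∨ f i ∈ C ∨ f i ∉ A := by
  classical
  set A' := (A.erase i0).erase (f i0) with hA'
  refine ⟨insert (f i0) C', ?_, ?_⟩
  · have hcard1 : (A.erase i0).card + 1 = A.card := Finset.card_erase_add_one hi0
    have hjmem : f i0 ∈ A.erase i0 := Finset.mem_erase.mpr ⟨hji, hj⟩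
    have hcard2 : A'.card + 1 = (A.erase i0).card := Finset.card_erase_add_one hjmem
    have := Finset.card_insert_le (f i0) C'
    omega
  · intro i hiA
    by_cases hii0 : i = i0
    · subst hii0
      exact Or.inr (Or.inl (Finset.mem_insert_self _ _))
    by_cases hifj : i = f i0
    · subst hifj
      exact Or.inl (Finset.mem_insert_self _ _)
    have hiA' : i ∈ A' := by
      rw [hA', Finset.mem_erase, Finset.mem_erase]
      exact ⟨hifj, hii0, hiA⟩
    rcases hC2 i hiA' with h | h | h
    · exact Or.inl (Finset.mem_insert_of_mem h)
    · exact Or.inr (Or.inl (Finset.mem_insert_of_mem h))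
    · by_cases hfi : f i = f i0
      · exact Or.inr (Or.inl (by rw [hfi]; exact Finset.mem_insert_self _ _))
      · have hfi0 : f i ≠ i0 := hpre i hiA'
        refine Or.inr (Or.inr ?_)
        intro hfiA
        exact h (by rw [hA', Finset.mem_erase, Finset.mem_erase]; exact ⟨hfi, hfi0, hfiA⟩)

end NN

section Cover

variable {X : Type*} [MetricSpace X] {n : ℕ}

/-- Every finite set of agents admits a half-size set `C` "dominating" it
under the nearest-neighbor map. -/
lemma cover (x : Fin n → X) (h2 : 2 ≤ n) :
    ∀ (m : ℕ) (A : Finset (Fin n)), A.card ≤ m →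
      ∃ C : Finset (Fin n), 2 * C.card ≤ A.card ∧
        ∀ i ∈ A, i ∈ C ∨ nnF x h2 i ∈ C ∨ nnF x h2 i ∉ A := by
  classical
  intro m
  induction m with
  | zero =>
    intro A hA
    refine ⟨∅, by simp, ?_⟩
    intro i hi
    exact absurd (Finset.card_eq_zero.mp (Nat.le_zero.mp hA) ▸ hi) (Finset.notMem_empty i)
  | succ m IH =>
    intro A hA
    set f := nnF x h2 with hf
    rcases Finset.eq_empty_or_nonempty A with rfl | hAne
    · exact ⟨∅, by simp, fun i hi => absurd hi (Finset.notMem_empty i)⟩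
    by_cases hcase : ∃ i0 ∈ A, ∀ i ∈ A, f i ≠ i0
    · obtain ⟨i0, hi0A, hpre⟩ := hcase
      by_cases hj : f i0 ∈ A
      · -- remove the pair i0, f i0
        have hji : f i0 ≠ i0 := nnF_ne x h2 i0
        have hcard1 : (A.erase i0).card + 1 = A.card := Finset.card_erase_add_one hi0A
        have hjmem : f i0 ∈ A.erase i0 := Finset.mem_erase.mpr ⟨hji, hj⟩
        have hcard2 : ((A.erase i0).erase (f i0)).card + 1 = (A.erase i0).card :=
          Finset.card_erase_add_one hjmem
        obtain ⟨C', hC1, hC2⟩ := IH ((A.erase i0).erase (f i0)) (by omega)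
        exact pair_step f A C' i0 hi0A hj hji hC1 hC2
          (fun i hi => hpre i (Finset.mem_of_mem_erase (Finset.mem_of_mem_erase hi)))
      · -- i0 is already escaping: f i0 ∉ A
        have hcard1 : (A.erase i0).card + 1 = A.card := Finset.card_erase_add_one hi0A
        obtain ⟨C', hC1, hC2⟩ := IH (A.erase i0) (by omega)
        refine ⟨C', by omega, ?_⟩
        intro i hiA
        by_cases hii0 : i = i0
        · subst hii0; exact Or.inr (Or.inr hj)
        have hiA' : i ∈ A.erase i0 := Finset.mem_erase.mpr ⟨hii0, hiA⟩
        rcases hC2 i hiA' with h | h | h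
        · exact Or.inl h
        · exact Or.inr (Or.inl h)
        · refine Or.inr (Or.inr ?_)
          intro hfiA
          exact h (Finset.mem_erase.mpr ⟨hpre i hiA, hfiA⟩)
    · -- every element of A has a preimage in A
      push_neg at hcase
      -- f restricted to A is a bijection of A
      have hsub : A ⊆ A.image f := by
        intro i0 hi0
        obtain ⟨i, hiA, hfi⟩ := hcase i0 hi0
        exact Finset.mem_image.mpr ⟨i, hiA, hfi⟩
      have himg : A.image f = A :=
        (Finset.eq_of_subset_of_card_le hsub (Finset.card_image_le)).symm
      have hinj : Set.InjOn f ↑A := by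
        apply Finset.injOn_of_card_image_eq
        rw [himg]
      have hfmem : ∀ i ∈ A, f i ∈ A := by
        intro i hi
        rw [← himg]
        exact Finset.mem_image_of_mem f hi
      -- find a mutual nearest-neighbor pair in A
      obtain ⟨i1, hi1A, hmin⟩ := A.exists_min_image (fun i => dist (x i) (x (f i))) hAne
      set B := A.filter (fun i => dist (x i) (x (f i)) = dist (x i1) (x (f i1))) with hB
      have hBne : B.Nonempty := ⟨i1, by simp [hB, hi1A]⟩
      set i0 := B.min' hBne with hi0def
      have hi0B : i0 ∈ A ∧ dist (x i0) (x (f i0)) = dist (x i1) (x (f i1)) :=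
        Finset.mem_filter.mp (B.min'_mem hBne)
      have hi0A : i0 ∈ A := hi0B.1
      have hji : f i0 ≠ i0 := nnF_ne x h2 i0
      have hjA : f i0 ∈ A := hfmem i0 hi0A
      -- distance from f i0 to its nearest neighbor equals the minimum
      have hdj : dist (x (f i0)) (x (f (f i0))) = dist (x i1) (x (f i1)) := by
        apply le_antisymm
        · calc dist (x (f i0)) (x (f (f i0))) ≤ dist (x (f i0)) (x i0) :=
                nnF_min x h2 (f i0) hji.symm
            _ = dist (x i0) (x (f i0)) := dist_comm _ _
            _ = dist (x i1) (x (f i1)) := hi0B.2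
        · exact hmin (f i0) hjA
      have hfj : f (f i0) = i0 := by
        by_contra hne
        have h1 : f (f i0) ≤ i0 := by
          apply nnF_tie x h2 (f i0) hji.symm
          rw [dist_comm, hi0B.2, ← hdj]
        have h2' : f (f i0) ∈ A := hfmem (f i0) hjA
        have h3 : dist (x (f (f i0))) (x (f (f (f i0)))) = dist (x i1) (x (f i1)) := by
          apply le_antisymm
          · calc dist (x (f (f i0))) (x (f (f (f i0))))
                ≤ dist (x (f (f i0))) (x (f i0)) :=
                  nnF_min x h2 (f (f i0)) (Ne.symm (nnF_ne x h2 (f i0)))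
              _ = dist (x (f i0)) (x (f (f i0))) := dist_comm _ _
              _ = dist (x i1) (x (f i1)) := hdj
          · exact hmin _ h2'
        have h4 : i0 ≤ f (f i0) := B.min'_le _ (Finset.mem_filter.mpr ⟨h2', h3⟩)
        exact hne (le_antisymm h1 h4)
      -- remove the pair
      have hcard1 : (A.erase i0).card + 1 = A.card := Finset.card_erase_add_one hi0A
      have hjmem : f i0 ∈ A.erase i0 := Finset.mem_erase.mpr ⟨hji, hjA⟩
      have hcard2 : ((A.erase i0).erase (f i0)).card + 1 = (A.erase i0).card :=
        Finset.card_erase_add_one hjmem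
      obtain ⟨C', hC1, hC2⟩ := IH ((A.erase i0).erase (f i0)) (by omega)
      apply pair_step f A C' i0 hi0A hjA hji hC1 hC2
      intro i hi hfi
      have hiA : i ∈ A := Finset.mem_of_mem_erase (Finset.mem_of_mem_erase hi)
      have : i = f i0 := hinj hiA hjA (by rw [hfi, hfj])
      exact (Finset.mem_erase.mp hi).1 this

end Cover

/-- The cost of agent location `p` under the `k`-clustering `Y`:
the minimum distance from `p` to a center of `Y`. -/
noncomputable def clusterCost {X : Type*} [MetricSpace X] {k : ℕ} (Y : Fin k → X) (p : X) : ℝ :=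
  sInf (Set.range fun j => dist p (Y j))

lemma clusterCost_le {X : Type*} [MetricSpace X] {k : ℕ} (Y : Fin k → X) (p : X) (j : Fin k) :
    clusterCost Y p ≤ dist p (Y j) :=
  csInf_le ⟨0, by rintro r ⟨j', rfl⟩; exact dist_nonneg⟩ ⟨j, rfl⟩

theorem stmt10 {X : Type*} [MetricSpace X] {n k : ℕ}
    (hk1 : (n : ℝ) / 2 ≤ (k : ℝ)) (hk2 : k + 2 ≤ n)
    (x : Fin n → X) :
    ∃ Y : Fin k → X,
      ∀ S : Finset (Fin n), (n : ℝ) / (k : ℝ) ≤ S.card →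
        ∀ y' : X,
          ∑ i ∈ S, clusterCost Y (x i) ≤ 2 * ∑ i ∈ S, dist (x i) y' := by
  classical
  have hn2k : n ≤ 2 * k := by
    have : (n : ℝ) ≤ 2 * (k : ℝ) := by linarith
    exact_mod_cast this
  have hk2' : 2 ≤ k := by omega
  have h2 : 2 ≤ n := by omega
  -- the dominating set
  obtain ⟨C, hCcard, hCcov⟩ := cover x h2 n Finset.univ (by simp)
  have hCcov' : ∀ i : Fin n, i ∈ C ∨ nnF x h2 i ∈ C := by
    intro i
    rcases hCcov i (Finset.mem_univ i) with h | h | h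
    · exact Or.inl h
    · exact Or.inr h
    · exact absurd (Finset.mem_univ _) h
  have hCk : C.card ≤ k := by
    rw [Finset.card_univ, Fintype.card_fin] at hCcard
    omega
  have hCne : C.Nonempty := by
    rcases hCcov' ⟨0, by omega⟩ with h | h
    · exact ⟨_, h⟩
    · exact ⟨_, h⟩
  obtain ⟨c0, hc0⟩ := hCne
  -- the clustering
  set Y : Fin k → X := fun j =>
    x (if h : (j : ℕ) < C.toList.length then C.toList.get ⟨j, h⟩ else c0) with hYdef
  have hY : ∀ c ∈ C, ∃ j : Fin k, Y j = x c := by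
    intro c hc
    have hcl : c ∈ C.toList := Finset.mem_toList.mpr hc
    obtain ⟨⟨m, hml⟩, hget⟩ := List.mem_iff_get.mp hcl
    have hmk : m < k := lt_of_lt_of_le (by rwa [Finset.length_toList] at hml) hCk
    refine ⟨⟨m, hmk⟩, ?_⟩
    rw [hYdef]
    simp only
    rw [dif_pos (show ((⟨m, hmk⟩ : Fin k) : ℕ) < C.toList.length from hml)]
    exact congrArg x hget
  -- key per-agent bound
  have key : ∀ i l : Fin n, l ≠ i → clusterCost Y (x i) ≤ dist (x i) (x l) := by
    intro i l hl
    rcases hCcov' i with h | h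
    · obtain ⟨j, hj⟩ := hY i h
      calc clusterCost Y (x i) ≤ dist (x i) (Y j) := clusterCost_le Y (x i) j
        _ = 0 := by rw [hj, dist_self]
        _ ≤ dist (x i) (x l) := dist_nonneg
    · obtain ⟨j, hj⟩ := hY _ h
      calc clusterCost Y (x i) ≤ dist (x i) (Y j) := clusterCost_le Y (x i) j
        _ = dist (x i) (x (nnF x h2 i)) := by rw [hj]
        _ ≤ dist (x i) (x l) := nnF_min x h2 i hl
  refine ⟨Y, ?_⟩
  intro S hS y'
  have hk0 : (0 : ℝ) < k := by positivity
  have hS2 : 2 ≤ S.card := by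
    have h1 : (1 : ℝ) < (n : ℝ) / k := by
      rw [lt_div_iff₀ hk0]
      have : (k : ℝ) + 2 ≤ n := by exact_mod_cast hk2
      linarith
    have : (1 : ℝ) < S.card := lt_of_lt_of_le h1 hS
    have : 1 < S.card := by exact_mod_cast this
    omega
  have hSne : S.Nonempty := Finset.card_pos.mp (by omega)
  obtain ⟨istar, histar, hmin⟩ := S.exists_min_image (fun i => dist (x i) y') hSne
  have hcard1 : (S.erase istar).card + 1 = S.card := Finset.card_erase_add_one histar
  have hEne : (S.erase istar).Nonempty := Finset.card_pos.mp (by omega)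
  obtain ⟨j0, hj0⟩ := hEne
  have hj0ne : j0 ≠ istar := (Finset.mem_erase.mp hj0).1
  have hj0S : j0 ∈ S := (Finset.mem_erase.mp hj0).2
  set D : Fin n → ℝ := fun i => dist (x i) y' with hD
  -- splitting sums
  have hsplit1 : clusterCost Y (x istar) + ∑ i ∈ S.erase istar, clusterCost Y (x i)
      = ∑ i ∈ S, clusterCost Y (x i) := Finset.add_sum_erase S (fun i => clusterCost Y (x i)) histar
  have hsplit2 : D istar + ∑ i ∈ S.erase istar, D i = ∑ i ∈ S, D i :=
    Finset.add_sum_erase S D histar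
  have hsplit3 : D j0 + ∑ i ∈ (S.erase istar).erase j0, D i = ∑ i ∈ S.erase istar, D i :=
    Finset.add_sum_erase _ D hj0
  -- bounds
  have hb1 : ∑ i ∈ S.erase istar, clusterCost Y (x i)
      ≤ ∑ i ∈ S.erase istar, (D i + D istar) := by
    apply Finset.sum_le_sum
    intro i hi
    have hne : istar ≠ i := fun h => (Finset.mem_erase.mp hi).1 h.symm
    calc clusterCost Y (x i) ≤ dist (x i) (x istar) := key i istar hne
      _ ≤ dist (x i) y' + dist (x istar) y' := dist_triangle_right _ _ _
  have hb1' : ∑ i ∈ S.erase istar, (D i + D istar)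
      = ∑ i ∈ S.erase istar, D i + ((S.erase istar).card : ℝ) * D istar := by
    rw [Finset.sum_add_distrib, Finset.sum_const, nsmul_eq_mul]
  have hb2 : clusterCost Y (x istar) ≤ D istar + D j0 := by
    calc clusterCost Y (x istar) ≤ dist (x istar) (x j0) := key istar j0 hj0ne
      _ ≤ dist (x istar) y' + dist (x j0) y' := dist_triangle_right _ _ _
  have hb3 : (((S.erase istar).erase j0).card : ℝ) * D istar
      ≤ ∑ i ∈ (S.erase istar).erase j0, D i := by
    have := Finset.card_nsmul_le_sum ((S.erase istar).erase j0) D (D istar)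
      (fun i hi => hmin i (Finset.mem_of_mem_erase (Finset.mem_of_mem_erase hi)))
    rwa [nsmul_eq_mul] at this
  have hcard2 : ((S.erase istar).erase j0).card + 1 = (S.erase istar).card :=
    Finset.card_erase_add_one hj0
  have hcard2' : (((S.erase istar).erase j0).card : ℝ) + 1 = ((S.erase istar).card : ℝ) := by
    exact_mod_cast hcard2
  have hDmin : D istar ≤ D j0 := hmin j0 hj0S
  have heta : S.sum D = ∑ i ∈ S, D i := rfl
  have hprod : ((S.erase istar).card : ℝ) * D istar
      = (((S.erase istar).erase j0).card : ℝ) * D istar + D istar := by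
    rw [← hcard2']; ring
  linarith
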